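/- Let n = 3, κ = 3, f(x) = −x₁ − x₂ + 2x₁x₂ + x₃², F₁(x) = (x₁, x₁ + x₂, x₃ − 1), F₂(x) = (x₃ − 2x₂, 2 − x₃, x₁ − x₂ + x₃). For every t ∈ (0,1), the point x^t = (t/2, t/2, 1) is a nondegenerate KKT point of the Scholtes regularization S(t) with H(x^t) = {2}, N₁(x^t) = {3}, N₂(x^t) = ∅, unique multipliers η₂ = 1 − t, ν₁,₃ = 2 − t + t² (all other multipliers zero), and quadratic index equal to 1. -/

import Mathlib

open Filter Topology Set

namespace MPCCPaper

variable {n κ : ℕ}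

/-- Differential of the `j`-th component of `F` at `x`. -/
noncomputable def Dc (F : (Fin n → ℝ) → Fin κ → ℝ) (j : Fin κ) (x : Fin n → ℝ) :
    (Fin n → ℝ) →L[ℝ] ℝ :=
  fderiv ℝ (fun y => F y j) x

/-- The MPCC feasible set `M`. -/
def Mset (F1 F2 : (Fin n → ℝ) → Fin κ → ℝ) : Set (Fin n → ℝ) :=
  {x | ∀ j, F1 x j * F2 x j = 0 ∧ 0 ≤ F1 x j ∧ 0 ≤ F2 x j}

/-- Feasible set `M^S(t)` of the Scholtes regularization. -/
def MS (F1 F2 : (Fin n → ℝ) → Fin κ → ℝ) (t : ℝ) : Set (Fin n → ℝ) :=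
  {x | ∀ j, F1 x j * F2 x j ≤ t ∧ 0 ≤ F1 x j ∧ 0 ≤ F2 x j}

/-- Feasible set `M^{S=}(t)` of the smoothing with equality constraints. -/
def MSeq (F1 F2 : (Fin n → ℝ) → Fin κ → ℝ) (t : ℝ) : Set (Fin n → ℝ) :=
  {x | ∀ j, F1 x j * F2 x j = t ∧ 0 ≤ F1 x j ∧ 0 ≤ F2 x j}

def a01 (F1 F2 : (Fin n → ℝ) → Fin κ → ℝ) (x : Fin n → ℝ) : Set (Fin κ) :=
  {j | F1 x j = 0 ∧ 0 < F2 x j}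

def a10 (F1 F2 : (Fin n → ℝ) → Fin κ → ℝ) (x : Fin n → ℝ) : Set (Fin κ) :=
  {j | 0 < F1 x j ∧ F2 x j = 0}

def a00 (F1 F2 : (Fin n → ℝ) → Fin κ → ℝ) (x : Fin n → ℝ) : Set (Fin κ) :=
  {j | F1 x j = 0 ∧ F2 x j = 0}

/-- Active set `H(x)` of the regularized constraints. -/
def Hset (F1 F2 : (Fin n → ℝ) → Fin κ → ℝ) (t : ℝ) (x : Fin n → ℝ) : Set (Fin κ) :=
  {j | F1 x j * F2 x j = t}

def N1set (F1 : (Fin n → ℝ) → Fin κ → ℝ) (x : Fin n → ℝ) : Set (Fin κ) :=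
  {j | F1 x j = 0}

def N2set (F2 : (Fin n → ℝ) → Fin κ → ℝ) (x : Fin n → ℝ) : Set (Fin κ) :=
  {j | F2 x j = 0}

/-- MPCC-tailored linear independence constraint qualification. -/
def MPCCLICQ (F1 F2 : (Fin n → ℝ) → Fin κ → ℝ) (x : Fin n → ℝ) : Prop :=
  LinearIndependent ℝ
    (Sum.elim
      (fun j : ↥(a01 F1 F2 x ∪ a00 F1 F2 x) => Dc F1 j.1 x)
      (fun j : ↥(a10 F1 F2 x ∪ a00 F1 F2 x) => Dc F2 j.1 x))

/-- Gradient of the product constraint `F1_j · F2_j` at `x`. -/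
noncomputable def gradProd (F1 F2 : (Fin n → ℝ) → Fin κ → ℝ) (j : Fin κ) (x : Fin n → ℝ) :
    (Fin n → ℝ) →L[ℝ] ℝ :=
  F2 x j • Dc F1 j x + F1 x j • Dc F2 j x

/-- LICQ for the Scholtes regularization `S(t)`. -/
def SLICQ (F1 F2 : (Fin n → ℝ) → Fin κ → ℝ) (t : ℝ) (x : Fin n → ℝ) : Prop :=
  LinearIndependent ℝ
    (Sum.elim (fun j : ↥(Hset F1 F2 t x) => gradProd F1 F2 j.1 x)
      (Sum.elim (fun j : ↥(N1set F1 x) => Dc F1 j.1 x)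
        (fun j : ↥(N2set F2 x) => Dc F2 j.1 x)))

/-- W-stationarity with prescribed multipliers (supported on the active index sets). -/
structure WStatWith (f : (Fin n → ℝ) → ℝ) (F1 F2 : (Fin n → ℝ) → Fin κ → ℝ)
    (x : Fin n → ℝ) (σ1 σ2 ϱ1 ϱ2 : Fin κ → ℝ) : Prop where
  feas : x ∈ Mset F1 F2
  supp_s1 : ∀ j, j ∉ a01 F1 F2 x → σ1 j = 0
  supp_s2 : ∀ j, j ∉ a10 F1 F2 x → σ2 j = 0
  supp_r1 : ∀ j, j ∉ a00 F1 F2 x → ϱ1 j = 0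
  supp_r2 : ∀ j, j ∉ a00 F1 F2 x → ϱ2 j = 0
  stat : fderiv ℝ f x =
    ∑ j, (σ1 j • Dc F1 j x + σ2 j • Dc F2 j x + ϱ1 j • Dc F1 j x + ϱ2 j • Dc F2 j x)

/-- C-stationarity with prescribed multipliers. -/
def CStatWith (f : (Fin n → ℝ) → ℝ) (F1 F2 : (Fin n → ℝ) → Fin κ → ℝ)
    (x : Fin n → ℝ) (σ1 σ2 ϱ1 ϱ2 : Fin κ → ℝ) : Prop :=
  WStatWith f F1 F2 x σ1 σ2 ϱ1 ϱ2 ∧ ∀ j ∈ a00 F1 F2 x, 0 ≤ ϱ1 j * ϱ2 j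

/-- S-stationarity with prescribed multipliers. -/
def SStatWith (f : (Fin n → ℝ) → ℝ) (F1 F2 : (Fin n → ℝ) → Fin κ → ℝ)
    (x : Fin n → ℝ) (σ1 σ2 ϱ1 ϱ2 : Fin κ → ℝ) : Prop :=
  WStatWith f F1 F2 x σ1 σ2 ϱ1 ϱ2 ∧ ∀ j ∈ a00 F1 F2 x, 0 ≤ ϱ1 j ∧ 0 ≤ ϱ2 j

/-- The MPCC Lagrange function for given multipliers. -/
noncomputable def Lag (f : (Fin n → ℝ) → ℝ) (F1 F2 : (Fin n → ℝ) → Fin κ → ℝ)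
    (σ1 σ2 ϱ1 ϱ2 : Fin κ → ℝ) (x : Fin n → ℝ) : ℝ :=
  f x - ∑ j, (σ1 j * F1 x j + σ2 j * F2 x j + ϱ1 j * F1 x j + ϱ2 j * F2 x j)

/-- The Hessian of `g` at `x` as a bilinear map, evaluated at `(ξ, ζ)`. -/
noncomputable def hBil (g : (Fin n → ℝ) → ℝ) (x ξ ζ : Fin n → ℝ) : ℝ :=
  iteratedFDeriv ℝ 2 g x ![ξ, ζ]

/-- The Hessian quadratic form of `g` at `x`. -/
noncomputable def hQ (g : (Fin n → ℝ) → ℝ) (x ξ : Fin n → ℝ) : ℝ := hBil g x ξ ξ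

/-- The tangent space `T_x` of MPCC at `x`. -/
def Tspace (F1 F2 : (Fin n → ℝ) → Fin κ → ℝ) (x : Fin n → ℝ) : Set (Fin n → ℝ) :=
  {ξ | (∀ j ∈ a01 F1 F2 x ∪ a00 F1 F2 x, Dc F1 j x ξ = 0) ∧
       (∀ j ∈ a10 F1 F2 x ∪ a00 F1 F2 x, Dc F2 j x ξ = 0)}

/-- Nondegeneracy of a bilinear form on a set (subspace). -/
def NondegOn (B : (Fin n → ℝ) → (Fin n → ℝ) → ℝ) (T : Set (Fin n → ℝ)) : Prop :=
  ∀ ξ ∈ T, (∀ ζ ∈ T, B ξ ζ = 0) → ξ = 0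

/-- `Q` has negative index `q` on `T`: `q` is the maximal dimension of a subspace of `T`
on which `Q` is negative definite. -/
def HasNegIndexOn (Q : (Fin n → ℝ) → ℝ) (T : Set (Fin n → ℝ)) (q : ℕ) : Prop :=
  (∃ W : Submodule ℝ (Fin n → ℝ), (W : Set (Fin n → ℝ)) ⊆ T ∧
      Module.finrank ℝ ↥W = q ∧ ∀ ξ ∈ W, ξ ≠ 0 → Q ξ < 0) ∧
  (∀ W : Submodule ℝ (Fin n → ℝ), (W : Set (Fin n → ℝ)) ⊆ T →
      (∀ ξ ∈ W, ξ ≠ 0 → Q ξ < 0) → Module.finrank ℝ ↥W ≤ q)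

/-- Nondegenerate C-stationary point (NDC1, NDC2, NDC3) with prescribed multipliers. -/
def NondegCStat (f : (Fin n → ℝ) → ℝ) (F1 F2 : (Fin n → ℝ) → Fin κ → ℝ)
    (x : Fin n → ℝ) (σ1 σ2 ϱ1 ϱ2 : Fin κ → ℝ) : Prop :=
  CStatWith f F1 F2 x σ1 σ2 ϱ1 ϱ2 ∧ MPCCLICQ F1 F2 x ∧
  (∀ j ∈ a00 F1 F2 x, 0 < ϱ1 j * ϱ2 j) ∧
  NondegOn (hBil (Lag f F1 F2 σ1 σ2 ϱ1 ϱ2) x) (Tspace F1 F2 x)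

/-- Condition NDC4: non-biactive multipliers do not vanish. -/
def NDC4 (F1 F2 : (Fin n → ℝ) → Fin κ → ℝ) (x : Fin n → ℝ) (σ1 σ2 : Fin κ → ℝ) : Prop :=
  (∀ j ∈ a01 F1 F2 x, σ1 j ≠ 0) ∧ (∀ j ∈ a10 F1 F2 x, σ2 j ≠ 0)

/-- The biactive index: number of negative biactive multiplier pairs. -/
noncomputable def BIndex (F1 F2 : (Fin n → ℝ) → Fin κ → ℝ) (x : Fin n → ℝ)
    (ϱ1 ϱ2 : Fin κ → ℝ) : ℕ :=
  {j | j ∈ a00 F1 F2 x ∧ ϱ1 j < 0 ∧ ϱ2 j < 0}.ncard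

/-- The C-index of a C-stationary point equals `c`. -/
def HasCIndex (f : (Fin n → ℝ) → ℝ) (F1 F2 : (Fin n → ℝ) → Fin κ → ℝ)
    (x : Fin n → ℝ) (σ1 σ2 ϱ1 ϱ2 : Fin κ → ℝ) (c : ℕ) : Prop :=
  ∃ q : ℕ,
    HasNegIndexOn (hQ (Lag f F1 F2 σ1 σ2 ϱ1 ϱ2) x) (Tspace F1 F2 x) q ∧
    c = q + BIndex F1 F2 x ϱ1 ϱ2

/-- Karush-Kuhn-Tucker point of the Scholtes regularization `S(t)` with multipliers. -/
structure KKTWith (f : (Fin n → ℝ) → ℝ) (F1 F2 : (Fin n → ℝ) → Fin κ → ℝ)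
    (t : ℝ) (x : Fin n → ℝ) (η ν1 ν2 : Fin κ → ℝ) : Prop where
  feas : x ∈ MS F1 F2 t
  eta_nn : ∀ j, 0 ≤ η j
  nu1_nn : ∀ j, 0 ≤ ν1 j
  nu2_nn : ∀ j, 0 ≤ ν2 j
  comp_eta : ∀ j, η j * (t - F1 x j * F2 x j) = 0
  comp_nu1 : ∀ j, ν1 j * F1 x j = 0
  comp_nu2 : ∀ j, ν2 j * F2 x j = 0
  stat : fderiv ℝ f x =
    ∑ j, (-(η j) • gradProd F1 F2 j x + ν1 j • Dc F1 j x + ν2 j • Dc F2 j x)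

/-- The Lagrange function of the Scholtes regularization `S(t)`. -/
noncomputable def LagS (f : (Fin n → ℝ) → ℝ) (F1 F2 : (Fin n → ℝ) → Fin κ → ℝ)
    (t : ℝ) (η ν1 ν2 : Fin κ → ℝ) (x : Fin n → ℝ) : ℝ :=
  f x - ∑ j, (η j * (t - F1 x j * F2 x j) + ν1 j * F1 x j + ν2 j * F2 x j)

/-- The tangent space `T^S_x` of `S(t)` at `x`. -/
def TspaceS (F1 F2 : (Fin n → ℝ) → Fin κ → ℝ) (t : ℝ) (x : Fin n → ℝ) :
    Set (Fin n → ℝ) :=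
  {ξ | (∀ j ∈ Hset F1 F2 t x, gradProd F1 F2 j x ξ = 0) ∧
       (∀ j ∈ N1set F1 x, Dc F1 j x ξ = 0) ∧
       (∀ j ∈ N2set F2 x, Dc F2 j x ξ = 0)}

/-- Nondegenerate KKT point of `S(t)` (ND1, ND2, ND3) with prescribed multipliers. -/
def NondegKKT (f : (Fin n → ℝ) → ℝ) (F1 F2 : (Fin n → ℝ) → Fin κ → ℝ)
    (t : ℝ) (x : Fin n → ℝ) (η ν1 ν2 : Fin κ → ℝ) : Prop :=
  KKTWith f F1 F2 t x η ν1 ν2 ∧ SLICQ F1 F2 t x ∧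
  (∀ j ∈ Hset F1 F2 t x, 0 < η j) ∧
  (∀ j ∈ N1set F1 x, 0 < ν1 j) ∧
  (∀ j ∈ N2set F2 x, 0 < ν2 j) ∧
  NondegOn (hBil (LagS f F1 F2 t η ν1 ν2) x) (TspaceS F1 F2 t x)

/-- KKT point of the smoothing `S^=(t)` with multipliers. -/
structure KKTEqWith (f : (Fin n → ℝ) → ℝ) (F1 F2 : (Fin n → ℝ) → Fin κ → ℝ)
    (t : ℝ) (x : Fin n → ℝ) (lam ν1 ν2 : Fin κ → ℝ) : Prop where
  feas : x ∈ MSeq F1 F2 t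
  nu1_nn : ∀ j, 0 ≤ ν1 j
  nu2_nn : ∀ j, 0 ≤ ν2 j
  comp_nu1 : ∀ j, ν1 j * F1 x j = 0
  comp_nu2 : ∀ j, ν2 j * F2 x j = 0
  stat : fderiv ℝ f x =
    ∑ j, (lam j • gradProd F1 F2 j x + ν1 j • Dc F1 j x + ν2 j • Dc F2 j x)

/-- The Lagrange function of the smoothing `S^=(t)`. -/
noncomputable def LagSeq (f : (Fin n → ℝ) → ℝ) (F1 F2 : (Fin n → ℝ) → Fin κ → ℝ)
    (t : ℝ) (lam ν1 ν2 : Fin κ → ℝ) (x : Fin n → ℝ) : ℝ :=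
  f x - ∑ j, (lam j * (F1 x j * F2 x j - t) + ν1 j * F1 x j + ν2 j * F2 x j)

/-- The tangent space `T^{S=}_x` of `S^=(t)` at `x`. -/
def TspaceSeq (F1 F2 : (Fin n → ℝ) → Fin κ → ℝ) (x : Fin n → ℝ) : Set (Fin n → ℝ) :=
  {ξ | (∀ j, gradProd F1 F2 j x ξ = 0) ∧
       (∀ j, F1 x j = 0 → Dc F1 j x ξ = 0) ∧
       (∀ j, F2 x j = 0 → Dc F2 j x ξ = 0)}

/-- LICQ for the smoothing `S^=(t)` at `x`: gradients of all active constraints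
(all equality constraints together with the active bound constraints) are linearly
independent. -/
def SeqLICQ (F1 F2 : (Fin n → ℝ) → Fin κ → ℝ) (x : Fin n → ℝ) : Prop :=
  LinearIndependent ℝ
    (Sum.elim (fun j : Fin κ => gradProd F1 F2 j x)
      (Sum.elim (fun j : ↥(N1set F1 x) => Dc F1 j.1 x)
        (fun j : ↥(N2set F2 x) => Dc F2 j.1 x)))

/-- Nondegenerate KKT point of the smoothing `S^=(t)` with prescribed multipliers. -/
def NondegKKTEq (f : (Fin n → ℝ) → ℝ) (F1 F2 : (Fin n → ℝ) → Fin κ → ℝ)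
    (t : ℝ) (x : Fin n → ℝ) (lam ν1 ν2 : Fin κ → ℝ) : Prop :=
  KKTEqWith f F1 F2 t x lam ν1 ν2 ∧ SeqLICQ F1 F2 x ∧
  (∀ j ∈ N1set F1 x, 0 < ν1 j) ∧
  (∀ j ∈ N2set F2 x, 0 < ν2 j) ∧
  NondegOn (hBil (LagSeq f F1 F2 t lam ν1 ν2) x) (TspaceSeq F1 F2 x)

/-- The critical cone `C_x` associated with an S-stationary point and its multipliers. -/
def Ccone (F1 F2 : (Fin n → ℝ) → Fin κ → ℝ) (x : Fin n → ℝ)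
    (σ1 σ2 ϱ1 ϱ2 : Fin κ → ℝ) : Set (Fin n → ℝ) :=
  {ξ | (∀ j, ((j ∈ a01 F1 F2 x ∧ σ1 j ≠ 0) ∨ (j ∈ a00 F1 F2 x ∧ 0 < ϱ1 j)) →
        Dc F1 j x ξ = 0) ∧
       (∀ j, ((j ∈ a10 F1 F2 x ∧ σ2 j ≠ 0) ∨ (j ∈ a00 F1 F2 x ∧ 0 < ϱ2 j)) →
        Dc F2 j x ξ = 0)}

/-- The cone `C^=_x` of critical directions used for MPCC-SOC. -/
def CconeEq (F1 F2 : (Fin n → ℝ) → Fin κ → ℝ) (x : Fin n → ℝ)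
    (ϱ1 ϱ2 : Fin κ → ℝ) : Set (Fin n → ℝ) :=
  {ξ | (∀ j, (j ∈ a01 F1 F2 x ∨ (j ∈ a00 F1 F2 x ∧ 0 < ϱ1 j)) → Dc F1 j x ξ = 0) ∧
       (∀ j, (j ∈ a10 F1 F2 x ∨ (j ∈ a00 F1 F2 x ∧ 0 < ϱ2 j)) → Dc F2 j x ξ = 0) ∧
       (∀ j ∈ a00 F1 F2 x, ϱ1 j = 0 → 0 ≤ Dc F1 j x ξ) ∧
       (∀ j ∈ a00 F1 F2 x, ϱ2 j = 0 → 0 ≤ Dc F2 j x ξ)}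

/-- Strong second order sufficiency condition. -/
def SSOSC (f : (Fin n → ℝ) → ℝ) (F1 F2 : (Fin n → ℝ) → Fin κ → ℝ)
    (x : Fin n → ℝ) (σ1 σ2 ϱ1 ϱ2 : Fin κ → ℝ) : Prop :=
  ∀ ξ ∈ Ccone F1 F2 x σ1 σ2 ϱ1 ϱ2, ξ ≠ 0 → 0 < hQ (Lag f F1 F2 σ1 σ2 ϱ1 ϱ2) x ξ

/-- Second order condition for MPCC (MPCC-SOC). -/
def MPCCSOC (f : (Fin n → ℝ) → ℝ) (F1 F2 : (Fin n → ℝ) → Fin κ → ℝ)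
    (x : Fin n → ℝ) (σ1 σ2 ϱ1 ϱ2 : Fin κ → ℝ) : Prop :=
  ∀ ξ ∈ CconeEq F1 F2 x ϱ1 ϱ2, ξ ≠ 0 → 0 < hQ (Lag f F1 F2 σ1 σ2 ϱ1 ϱ2) x ξ

noncomputable def fEx2 : (Fin 3 → ℝ) → ℝ :=
  fun x => -x 0 - x 1 + 2 * x 0 * x 1 + (x 2)^2

noncomputable def F1Ex2 : (Fin 3 → ℝ) → Fin 3 → ℝ :=
  fun x => ![x 0, x 0 + x 1, x 2 - 1]

noncomputable def F2Ex2 : (Fin 3 → ℝ) → Fin 3 → ℝ :=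
  fun x => ![x 2 - 2 * x 1, 2 - x 2, x 0 - x 1 + x 2]

noncomputable def xtEx2 (t : ℝ) : Fin 3 → ℝ := ![t/2, t/2, 1]

noncomputable def ηEx2 (t : ℝ) : Fin 3 → ℝ := ![0, 1 - t, 0]

noncomputable def ν1Ex2 (t : ℝ) : Fin 3 → ℝ := ![0, 0, 2 - t + t^2]

-- ### Auxiliary infrastructure for STATEMENT 15

noncomputable def pr3 (i : Fin 3) : (Fin 3 → ℝ) →L[ℝ] ℝ :=
  ContinuousLinearMap.proj i

lemma hasF_coord (i : Fin 3) (y : Fin 3 → ℝ) :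
    HasFDerivAt (fun z : Fin 3 → ℝ => z i) (pr3 i) y := hasFDerivAt_apply i y

lemma aux_Dc1_0 (y ξ : Fin 3 → ℝ) : Dc F1Ex2 0 y ξ = ξ 0 := by
  have hfe : (fun z : Fin 3 → ℝ => F1Ex2 z 0) = fun z : Fin 3 → ℝ => z 0 := by
    funext z; simp [F1Ex2]
  rw [Dc, hfe, (hasF_coord 0 y).fderiv]; simp [pr3]

lemma aux_Dc1_1 (y ξ : Fin 3 → ℝ) : Dc F1Ex2 1 y ξ = ξ 0 + ξ 1 := by
  have hfe : (fun z : Fin 3 → ℝ => F1Ex2 z 1) = fun z : Fin 3 → ℝ => z 0 + z 1 := by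
    funext z; simp [F1Ex2]
  rw [Dc, hfe, (show HasFDerivAt (fun z : Fin 3 → ℝ => z 0 + z 1) _ y from
    ((hasF_coord 0 y).add (hasF_coord 1 y))).fderiv]; simp [pr3]

lemma aux_Dc1_2 (y ξ : Fin 3 → ℝ) : Dc F1Ex2 2 y ξ = ξ 2 := by
  have hfe : (fun z : Fin 3 → ℝ => F1Ex2 z 2) = fun z : Fin 3 → ℝ => z 2 - 1 := by
    funext z; simp [F1Ex2]
  rw [Dc, hfe, ((hasF_coord 2 y).sub_const 1).fderiv]; simp [pr3]

lemma aux_Dc2_0 (y ξ : Fin 3 → ℝ) : Dc F2Ex2 0 y ξ = ξ 2 - 2 * ξ 1 := by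
  have hfe : (fun z : Fin 3 → ℝ => F2Ex2 z 0) = fun z : Fin 3 → ℝ => z 2 - 2 * z 1 := by
    funext z; simp [F2Ex2]
  rw [Dc, hfe, (show HasFDerivAt (fun z : Fin 3 → ℝ => z 2 - 2 * z 1) _ y from
    ((hasF_coord 2 y).sub ((hasF_coord 1 y).const_mul 2))).fderiv]; simp [pr3]

lemma aux_Dc2_1 (y ξ : Fin 3 → ℝ) : Dc F2Ex2 1 y ξ = -ξ 2 := by
  have hfe : (fun z : Fin 3 → ℝ => F2Ex2 z 1) = fun z : Fin 3 → ℝ => 2 - z 2 := by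
    funext z; simp [F2Ex2]
  rw [Dc, hfe, ((hasF_coord 2 y).const_sub 2).fderiv]; simp [pr3]

lemma aux_Dc2_2 (y ξ : Fin 3 → ℝ) : Dc F2Ex2 2 y ξ = ξ 0 - ξ 1 + ξ 2 := by
  have hfe : (fun z : Fin 3 → ℝ => F2Ex2 z 2) = fun z : Fin 3 → ℝ => z 0 - z 1 + z 2 := by
    funext z; simp [F2Ex2]
  rw [Dc, hfe, (show HasFDerivAt (fun z : Fin 3 → ℝ => z 0 - z 1 + z 2) _ y from
    (((hasF_coord 0 y).sub (hasF_coord 1 y)).add (hasF_coord 2 y))).fderiv]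
  simp [pr3]

lemma aux_fderiv_f (y ξ : Fin 3 → ℝ) :
    fderiv ℝ fEx2 y ξ = (-1 + 2*y 1)*ξ 0 + (-1 + 2*y 0)*ξ 1 + 2*y 2*ξ 2 := by
  have hfe : fEx2 = fun x : Fin 3 → ℝ => -x 0 - x 1 + 2 * x 0 * x 1 + x 2 * x 2 := by
    funext x; simp [fEx2]; ring
  rw [hfe]
  have h : HasFDerivAt (fun x : Fin 3 → ℝ => -x 0 - x 1 + 2 * x 0 * x 1 + x 2 * x 2) _ y :=
    (((hasF_coord 0 y).neg.sub (hasF_coord 1 y)).add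
      (((hasF_coord 0 y).const_mul 2).mul (hasF_coord 1 y))).add
      ((hasF_coord 2 y).mul (hasF_coord 2 y))
  rw [h.fderiv]
  simp [pr3]
  ring

lemma aux_F1val (t : ℝ) : F1Ex2 (xtEx2 t) = ![t/2, t, 0] := by
  funext j; fin_cases j <;> simp [F1Ex2, xtEx2] <;> ring

lemma aux_F2val (t : ℝ) : F2Ex2 (xtEx2 t) = ![1 - t, 1, 1] := by
  funext j; fin_cases j <;> simp [F2Ex2, xtEx2] <;> ring

lemma aux_gp0 (t : ℝ) (ξ : Fin 3 → ℝ) :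
    gradProd F1Ex2 F2Ex2 0 (xtEx2 t) ξ = (1-t)*ξ 0 + t/2*(ξ 2 - 2*ξ 1) := by
  simp [gradProd, aux_F1val, aux_F2val, aux_Dc1_0, aux_Dc2_0]

lemma aux_gp1 (t : ℝ) (ξ : Fin 3 → ℝ) :
    gradProd F1Ex2 F2Ex2 1 (xtEx2 t) ξ = ξ 0 + ξ 1 - t * ξ 2 := by
  simp [gradProd, aux_F1val, aux_F2val, aux_Dc1_1, aux_Dc2_1]; ring

lemma aux_gp2 (t : ℝ) (ξ : Fin 3 → ℝ) :
    gradProd F1Ex2 F2Ex2 2 (xtEx2 t) ξ = ξ 2 := by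
  simp [gradProd, aux_F1val, aux_F2val, aux_Dc1_2, aux_Dc2_2]

noncomputable def GEx2 (t : ℝ) (y : Fin 3 → ℝ) : (Fin 3 → ℝ) →L[ℝ] ℝ :=
  (-1 + 2*y 1 + (1-t)*(2 - y 2)) • pr3 0 + (-1 + 2*y 0 + (1-t)*(2 - y 2)) • pr3 1 +
  (2*y 2 - (1-t)*(y 0 + y 1) - (2 - t + t^2)) • pr3 2

lemma aux_lagS_eq (t : ℝ) : LagS fEx2 F1Ex2 F2Ex2 t (ηEx2 t) (ν1Ex2 t) 0 =
    fun y : Fin 3 → ℝ =>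
      -y 0 - y 1 + 2*y 0*y 1 + y 2*y 2 -
        ((1-t)*(t - (y 0 + y 1)*(2 - y 2)) + (2-t+t^2)*(y 2 - 1)) := by
  funext y
  simp [LagS, fEx2, F1Ex2, F2Ex2, ηEx2, ν1Ex2, Fin.sum_univ_three]
  ring

lemma aux_hasF_L (t : ℝ) (y : Fin 3 → ℝ) :
    HasFDerivAt (LagS fEx2 F1Ex2 F2Ex2 t (ηEx2 t) (ν1Ex2 t) 0) (GEx2 t y) y := by
  rw [aux_lagS_eq]
  have h : HasFDerivAt (fun y : Fin 3 → ℝ =>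
      -y 0 - y 1 + 2*y 0*y 1 + y 2*y 2 -
        ((1-t)*(t - (y 0 + y 1)*(2 - y 2)) + (2-t+t^2)*(y 2 - 1))) _ y :=
    ((((hasF_coord 0 y).neg.sub (hasF_coord 1 y)).add
      (((hasF_coord 0 y).const_mul 2).mul (hasF_coord 1 y))).add
      ((hasF_coord 2 y).mul (hasF_coord 2 y))).sub
      (((((((hasF_coord 0 y).add (hasF_coord 1 y)).mul
          ((hasF_coord 2 y).const_sub 2)).const_sub t).const_mul (1-t)).add
        (((hasF_coord 2 y).sub_const 1).const_mul (2-t+t^2))))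
  refine h.congr_fderiv ?_
  refine ContinuousLinearMap.ext fun ξ => ?_
  simp [GEx2, pr3]
  ring

lemma aux_hBil_eval (t : ℝ) (ξ ζ : Fin 3 → ℝ) :
    hBil (LagS fEx2 F1Ex2 F2Ex2 t (ηEx2 t) (ν1Ex2 t) 0) (xtEx2 t) ξ ζ =
      (2*ξ 1 - (1-t)*ξ 2)*ζ 0 + (2*ξ 0 - (1-t)*ξ 2)*ζ 1 +
        (2*ξ 2 - (1-t)*(ξ 0 + ξ 1))*ζ 2 := by
  rw [hBil, iteratedFDeriv_two_apply]
  have hL : fderiv ℝ (LagS fEx2 F1Ex2 F2Ex2 t (ηEx2 t) (ν1Ex2 t) 0) = GEx2 t :=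
    funext fun y => (aux_hasF_L t y).fderiv
  rw [hL]
  set x := xtEx2 t
  have hG : HasFDerivAt (GEx2 t) _ x :=
    ((((((hasF_coord 1 x).const_mul 2).const_add (-1)).add
        (((hasF_coord 2 x).const_sub 2).const_mul (1-t))).smul
        (hasFDerivAt_const (pr3 0) x)).add
      (((((hasF_coord 0 x).const_mul 2).const_add (-1)).add
        (((hasF_coord 2 x).const_sub 2).const_mul (1-t))).smul
        (hasFDerivAt_const (pr3 1) x))).add
      (((((hasF_coord 2 x).const_mul 2).sub
        (((hasF_coord 0 x).add (hasF_coord 1 x)).const_mul (1-t))).sub_const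
          (2-t+t^2)).smul (hasFDerivAt_const (pr3 2) x))
  rw [hG.fderiv]
  simp [pr3, GEx2]
  ring

noncomputable def e3 : Fin 3 → ℝ := ![1, -1, 0]

lemma aux_Hset (t : ℝ) (ht0 : 0 < t) (ht1 : t < 1) :
    Hset F1Ex2 F2Ex2 t (xtEx2 t) = {1} := by
  ext j
  simp only [Hset, aux_F1val, aux_F2val, Set.mem_setOf_eq, Set.mem_singleton_iff]
  fin_cases j
  · simp
    intro h; nlinarith
  · simp
  · simp
    intro h; linarith

lemma aux_N1set (t : ℝ) (ht0 : 0 < t) :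
    N1set F1Ex2 (xtEx2 t) = {2} := by
  ext j
  simp only [N1set, aux_F1val, Set.mem_setOf_eq, Set.mem_singleton_iff]
  fin_cases j
  · simp; intro h; linarith
  · simp; intro h; linarith
  · simp

lemma aux_N2set (t : ℝ) (ht1 : t < 1) :
    N2set F2Ex2 (xtEx2 t) = ∅ := by
  ext j
  simp only [N2set, aux_F2val, Set.mem_setOf_eq, Set.mem_empty_iff_false, iff_false]
  fin_cases j
  · simp; intro h; linarith
  · simp
  · simp

lemma aux_Tmem (t : ℝ) (ht0 : 0 < t) (ht1 : t < 1) (ξ : Fin 3 → ℝ) :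
    ξ ∈ TspaceS F1Ex2 F2Ex2 t (xtEx2 t) ↔ ∃ c : ℝ, ξ = c • e3 := by
  constructor
  · rintro ⟨h1, h2, h3⟩
    have hg := h1 1 (by rw [aux_Hset t ht0 ht1]; rfl)
    have hn := h2 2 (by rw [aux_N1set t ht0]; rfl)
    rw [aux_gp1] at hg
    rw [aux_Dc1_2] at hn
    rw [hn] at hg
    have hg' : ξ 0 + ξ 1 = 0 := by linarith
    refine ⟨ξ 0, funext fun i => ?_⟩
    fin_cases i <;> simp [e3] <;> linarith
  · rintro ⟨c, rfl⟩
    refine ⟨?_, ?_, ?_⟩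
    · intro j hj
      rw [aux_Hset t ht0 ht1, Set.mem_singleton_iff] at hj
      subst hj
      rw [aux_gp1]
      simp [e3]
    · intro j hj
      rw [aux_N1set t ht0, Set.mem_singleton_iff] at hj
      subst hj
      rw [aux_Dc1_2]
      simp [e3]
    · intro j hj
      rw [aux_N2set t ht1] at hj
      exact absurd hj (Set.notMem_empty j)

lemma aux_kkt (t : ℝ) (ht0 : 0 < t) (ht1 : t < 1) :
    KKTWith fEx2 F1Ex2 F2Ex2 t (xtEx2 t) (ηEx2 t) (ν1Ex2 t) 0 := by
  constructor
  · intro j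
    fin_cases j <;>
      simp only [MS, Set.mem_setOf_eq, aux_F1val, aux_F2val] <;>
      refine ⟨?_, ?_, ?_⟩ <;> simp <;> nlinarith
  · intro j; fin_cases j <;> simp [ηEx2] <;> linarith
  · intro j; fin_cases j <;> simp [ν1Ex2] <;> nlinarith
  · intro j; simp
  · intro j
    fin_cases j <;> simp [ηEx2, aux_F1val, aux_F2val] <;> ring
  · intro j
    fin_cases j <;> simp [ν1Ex2, aux_F1val]
  · intro j; simp
  · refine ContinuousLinearMap.ext fun ξ => ?_
    rw [aux_fderiv_f]
    simp only [Fin.sum_univ_three, ContinuousLinearMap.add_apply,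
      ContinuousLinearMap.coe_smul', Pi.smul_apply, smul_eq_mul,
      aux_gp0, aux_gp1, aux_gp2, aux_Dc1_0, aux_Dc1_1, aux_Dc1_2,
      aux_Dc2_0, aux_Dc2_1, aux_Dc2_2]
    simp [ηEx2, ν1Ex2, xtEx2]
    ring

lemma aux_slicq (t : ℝ) (ht0 : 0 < t) (ht1 : t < 1) :
    SLICQ F1Ex2 F2Ex2 t (xtEx2 t) := by
  unfold SLICQ
  rw [aux_Hset t ht0 ht1, aux_N1set t ht0, aux_N2set t ht1]
  have hpair : LinearIndependent ℝ
      ![gradProd F1Ex2 F2Ex2 1 (xtEx2 t), Dc F1Ex2 2 (xtEx2 t)] := by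
    rw [LinearIndependent.pair_iff]
    intro s u h
    have h0 := DFunLike.congr_fun h ![(1:ℝ), 0, 0]
    have h2 := DFunLike.congr_fun h ![(0:ℝ), 0, 1]
    simp [aux_gp1, aux_Dc1_2] at h0 h2
    constructor
    · linarith
    · nlinarith
  let φ : ↥({1} : Set (Fin 3)) ⊕ (↥({2} : Set (Fin 3)) ⊕ ↥(∅ : Set (Fin 3))) → Fin 2 :=
    Sum.elim (fun _ => 0) (Sum.elim (fun _ => 1)
      (fun j => absurd j.2 (Set.notMem_empty j.1)))
  have hinj : Function.Injective φ := by
    rintro (a | a | a) (b | b | b) h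
    · exact congrArg Sum.inl (Subtype.ext ((Set.mem_singleton_iff.mp a.2).trans
        (Set.mem_singleton_iff.mp b.2).symm))
    · simp [φ] at h
    · exact absurd b.2 (Set.notMem_empty b.1)
    · simp [φ] at h
    · exact congrArg (Sum.inr ∘ Sum.inl) (Subtype.ext ((Set.mem_singleton_iff.mp a.2).trans
        (Set.mem_singleton_iff.mp b.2).symm))
    · exact absurd b.2 (Set.notMem_empty b.1)
    · exact absurd a.2 (Set.notMem_empty a.1)
    · exact absurd a.2 (Set.notMem_empty a.1)
    · exact absurd a.2 (Set.notMem_empty a.1)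
  have heq : (Sum.elim
      (fun j : ↥({1} : Set (Fin 3)) => gradProd F1Ex2 F2Ex2 j.1 (xtEx2 t))
      (Sum.elim (fun j : ↥({2} : Set (Fin 3)) => Dc F1Ex2 j.1 (xtEx2 t))
        (fun j : ↥(∅ : Set (Fin 3)) => Dc F2Ex2 j.1 (xtEx2 t)))) =
      ![gradProd F1Ex2 F2Ex2 1 (xtEx2 t), Dc F1Ex2 2 (xtEx2 t)] ∘ φ := by
    funext i
    rcases i with a | a | a
    · have ha : a.1 = 1 := Set.mem_singleton_iff.mp a.2
      simp [φ, ha]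
    · have ha : a.1 = 2 := Set.mem_singleton_iff.mp a.2
      simp [φ, ha]
    · exact absurd a.2 (Set.notMem_empty a.1)
  rw [heq]
  exact hpair.comp φ hinj

lemma aux_e3_ne : e3 ≠ 0 := by
  intro h
  have := congrFun h 0
  simp [e3] at this

lemma aux_nondeg (t : ℝ) (ht0 : 0 < t) (ht1 : t < 1) :
    NondegOn (hBil (LagS fEx2 F1Ex2 F2Ex2 t (ηEx2 t) (ν1Ex2 t) 0) (xtEx2 t))
      (TspaceS F1Ex2 F2Ex2 t (xtEx2 t)) := by
  intro ξ hξ h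
  obtain ⟨c, rfl⟩ := (aux_Tmem t ht0 ht1 ξ).mp hξ
  have he : e3 ∈ TspaceS F1Ex2 F2Ex2 t (xtEx2 t) :=
    (aux_Tmem t ht0 ht1 e3).mpr ⟨1, (one_smul ℝ e3).symm⟩
  have hb := h e3 he
  rw [aux_hBil_eval] at hb
  simp [e3] at hb
  have hc : c = 0 := by linarith
  simp [hc]

lemma aux_negindex (t : ℝ) (ht0 : 0 < t) (ht1 : t < 1) :
    HasNegIndexOn (hQ (LagS fEx2 F1Ex2 F2Ex2 t (ηEx2 t) (ν1Ex2 t) 0) (xtEx2 t))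
      (TspaceS F1Ex2 F2Ex2 t (xtEx2 t)) 1 := by
  constructor
  · refine ⟨Submodule.span ℝ {e3}, ?_, ?_, ?_⟩
    · intro ξ hξ
      obtain ⟨c, hc⟩ := Submodule.mem_span_singleton.mp hξ
      exact (aux_Tmem t ht0 ht1 ξ).mpr ⟨c, hc.symm⟩
    · exact finrank_span_singleton aux_e3_ne
    · intro ξ hmem hne
      obtain ⟨c, rfl⟩ := Submodule.mem_span_singleton.mp hmem
      have hc : c ≠ 0 := by
        intro h0
        exact hne (by simp [h0])
      simp only [hQ]
      rw [aux_hBil_eval]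
      simp [e3]
      nlinarith [mul_self_pos.mpr hc]
  · intro W hsub hneg
    have hle : W ≤ Submodule.span ℝ {e3} := by
      intro ξ hξ
      obtain ⟨c, hc⟩ := (aux_Tmem t ht0 ht1 ξ).mp (hsub hξ)
      exact Submodule.mem_span_singleton.mpr ⟨c, hc.symm⟩
    calc Module.finrank ℝ ↥W ≤ Module.finrank ℝ ↥(Submodule.span ℝ {e3}) :=
          Submodule.finrank_mono hle
      _ = 1 := finrank_span_singleton aux_e3_ne

lemma aux_unique (t : ℝ) (ht0 : 0 < t) (ht1 : t < 1) (η ν1 ν2 : Fin 3 → ℝ)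
    (hK : KKTWith fEx2 F1Ex2 F2Ex2 t (xtEx2 t) η ν1 ν2) :
    η = ηEx2 t ∧ ν1 = ν1Ex2 t ∧ ν2 = 0 := by
  have h00 : η 0 = 0 := by
    have h := hK.comp_eta 0
    simp [aux_F1val, aux_F2val] at h
    rcases h with h | h
    · exact h
    · exfalso; nlinarith
  have h20 : η 2 = 0 := by
    have h := hK.comp_eta 2
    simp [aux_F1val, aux_F2val] at h
    rcases h with h | h
    · exact h
    · exfalso; linarith
  have hv10 : ν1 0 = 0 := by
    have h := hK.comp_nu1 0
    simp [aux_F1val] at h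
    rcases h with h | h
    · exact h
    · exfalso; linarith
  have hv11 : ν1 1 = 0 := by
    have h := hK.comp_nu1 1
    simp [aux_F1val] at h
    rcases h with h | h
    · exact h
    · exfalso; linarith
  have hv2 : ν2 = 0 := by
    funext j
    fin_cases j
    · have h := hK.comp_nu2 0
      simp [aux_F2val] at h
      rcases h with h | h
      · simpa using h
      · exfalso; linarith
    · have h := hK.comp_nu2 1
      simp [aux_F2val] at h
      simpa using h
    · have h := hK.comp_nu2 2
      simp [aux_F2val] at h
      simpa using h
  have hs := hK.stat
  have E0 := DFunLike.congr_fun hs ![(1:ℝ), 0, 0]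
  have E2 := DFunLike.congr_fun hs ![(0:ℝ), 0, 1]
  rw [aux_fderiv_f] at E0 E2
  simp only [Fin.sum_univ_three, ContinuousLinearMap.add_apply,
    ContinuousLinearMap.coe_smul', Pi.smul_apply, smul_eq_mul,
    aux_gp0, aux_gp1, aux_gp2, aux_Dc1_0, aux_Dc1_1, aux_Dc1_2,
    aux_Dc2_0, aux_Dc2_1, aux_Dc2_2] at E0 E2
  simp [xtEx2, h00, h20, hv10, hv11, hv2] at E0 E2
  have hη1 : η 1 = 1 - t := by linarith
  rw [hη1] at E2
  have hv12 : ν1 2 = 2 - t + t^2 := by nlinarith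
  refine ⟨?_, ?_, hv2⟩
  · funext j
    fin_cases j <;> simp [ηEx2, h00, h20, hη1]
  · funext j
    fin_cases j <;> simp [ν1Ex2, hv10, hv11, hv12]

/-- Example (necessity of NDC4), the regularized problem: for
`t ∈ (0,1)`, `x^t = (t/2, t/2, 1)` is a nondegenerate KKT point of `S(t)` with the stated
active sets and unique multipliers, and quadratic index `1`. -/
theorem example_ndc4_kkt_points :
    ∀ t ∈ Set.Ioo (0:ℝ) 1,
      NondegKKT fEx2 F1Ex2 F2Ex2 t (xtEx2 t) (ηEx2 t) (ν1Ex2 t) 0 ∧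
      Hset F1Ex2 F2Ex2 t (xtEx2 t) = {1} ∧
      N1set F1Ex2 (xtEx2 t) = {2} ∧
      N2set F2Ex2 (xtEx2 t) = ∅ ∧
      (∀ η ν1 ν2 : Fin 3 → ℝ, KKTWith fEx2 F1Ex2 F2Ex2 t (xtEx2 t) η ν1 ν2 →
        η = ηEx2 t ∧ ν1 = ν1Ex2 t ∧ ν2 = 0) ∧
      HasNegIndexOn (hQ (LagS fEx2 F1Ex2 F2Ex2 t (ηEx2 t) (ν1Ex2 t) 0) (xtEx2 t))
        (TspaceS F1Ex2 F2Ex2 t (xtEx2 t)) 1 := by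
  rintro t ⟨ht0, ht1⟩
  refine ⟨⟨aux_kkt t ht0 ht1, aux_slicq t ht0 ht1, ?_, ?_, ?_, aux_nondeg t ht0 ht1⟩,
    aux_Hset t ht0 ht1, aux_N1set t ht0, aux_N2set t ht1,
    fun η ν1 ν2 hK => aux_unique t ht0 ht1 η ν1 ν2 hK, aux_negindex t ht0 ht1⟩
  · intro j hj
    rw [aux_Hset t ht0 ht1, Set.mem_singleton_iff] at hj
    subst hj
    simp [ηEx2]
    linarith
  · intro j hj
    rw [aux_N1set t ht0, Set.mem_singleton_iff] at hj
    subst hj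
    simp [ν1Ex2]
    nlinarith
  · intro j hj
    rw [aux_N2set t ht1] at hj
    exact absurd hj (Set.notMem_empty j)


end MPCCPaper
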